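/- Equip ℝ³ with the Minkowski bilinear form ⟨p, q⟩₁ = p₁q₁ + p₂q₂ − p₃q₃. Call an affine bijection S(p) = L(p) + b of ℝ³ (L linear, b ∈ ℝ³) a Lorentz isometry if ⟨L p, L q⟩₁ = ⟨p, q⟩₁ for all p, q, and time-orientation preserving if the third coordinate of L(0,0,1) is positive. Let Iso_ξ denote the group of Lorentz isometries whose linear part fixes the vector (0,0,1), and let G be the subgroup of linear Lorentz isometries generated by the hyperbolic rotations φ_θ(x,y,z) = (x, y cosh θ + z sinh θ, y sinh θ + z cosh θ), θ ∈ ℝ, and the parabolic rotations ψ_a(x,y,z) = (x − a y + a z, a x + (1 − a²/2) y + (a²/2) z, a x − (a²/2) y + (1 + a²/2) z), a ∈ ℝ. Then for every time-orientation preserving Lorentz isometry S of ℝ³ there exist unique S₁ ∈ Iso_ξ and S₂ ∈ G such that S = S₁ ∘ S₂. -/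

import Mathlib

/-- The Minkowski bilinear form `⟨p, q⟩₁ = p₁q₁ + p₂q₂ − p₃q₃` on `ℝ³`. -/
def mink (p q : Fin 3 → ℝ) : ℝ := p 0 * q 0 + p 1 * q 1 - p 2 * q 2

/-- The vector `(0,0,1)`. -/
def e3 : Fin 3 → ℝ := ![0, 0, 1]

/-- The linear part `p ↦ S(p) − S(0)` of an affine map `S`. -/
def linPart (S : (Fin 3 → ℝ) → (Fin 3 → ℝ)) (p : Fin 3 → ℝ) : Fin 3 → ℝ := S p - S 0

/-- A Lorentz isometry of `𝕃³`: an affine bijection `S(p) = L(p) + b` whose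
linear part `L` preserves the Minkowski form. -/
def IsLorentzIso (S : (Fin 3 → ℝ) → (Fin 3 → ℝ)) : Prop :=
  ∃ (L : (Fin 3 → ℝ) →ₗ[ℝ] (Fin 3 → ℝ)) (b : Fin 3 → ℝ),
    Function.Bijective L ∧ (∀ p q, mink (L p) (L q) = mink p q) ∧ ∀ p, S p = L p + b

/-- The hyperbolic rotation `φ_θ(x,y,z) = (x, y cosh θ + z sinh θ, y sinh θ + z cosh θ)`. -/
noncomputable def hypRot (θ : ℝ) (p : Fin 3 → ℝ) : Fin 3 → ℝ :=
  ![p 0, p 1 * Real.cosh θ + p 2 * Real.sinh θ, p 1 * Real.sinh θ + p 2 * Real.cosh θ]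

/-- The parabolic rotation
`ψ_a(x,y,z) = (x − ay + az, ax + (1 − a²/2)y + (a²/2)z, ax − (a²/2)y + (1 + a²/2)z)`. -/
noncomputable def parRot (a : ℝ) (p : Fin 3 → ℝ) : Fin 3 → ℝ :=
  ![p 0 - a * p 1 + a * p 2,
    a * p 0 + (1 - a ^ 2 / 2) * p 1 + (a ^ 2 / 2) * p 2,
    a * p 0 - (a ^ 2 / 2) * p 1 + (1 + a ^ 2 / 2) * p 2]

/-- The subgroup `G` generated by the hyperbolic and parabolic rotations (the
generating set is closed under inverses, so closure under composition generates
the subgroup). -/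
inductive InG : ((Fin 3 → ℝ) → (Fin 3 → ℝ)) → Prop
  | hyp (θ : ℝ) : InG (hypRot θ)
  | par (a : ℝ) : InG (parRot a)
  | comp {S T : (Fin 3 → ℝ) → (Fin 3 → ℝ)} : InG S → InG T → InG (S ∘ T)

/-! ### Auxiliary material -/

noncomputable def gg (a θ : ℝ) : (Fin 3 → ℝ) → (Fin 3 → ℝ) := parRot a ∘ hypRot θ

lemma gg_comp (a θ a' θ' : ℝ) :
    gg a θ ∘ gg a' θ' = gg (a + a' * Real.exp θ) (θ + θ') := by
  have hid : Real.cosh θ ^ 2 - Real.sinh θ ^ 2 = 1 := Real.cosh_sq_sub_sinh_sq θ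
  have he : Real.exp θ = Real.cosh θ + Real.sinh θ := (Real.cosh_add_sinh θ).symm
  funext p i
  fin_cases i <;>
    (simp [gg, parRot, hypRot]; rw [Real.cosh_add, Real.sinh_add, he]) <;>
    first
    | linear_combination (-a' * (p 2 - p 1) * (Real.cosh θ' - Real.sinh θ')) * hid
    | linear_combination
        (-(a * a' + a' ^ 2 / 2 * (Real.cosh θ + Real.sinh θ)) * (p 2 - p 1) *
          (Real.cosh θ' - Real.sinh θ')) * hid

lemma gg_id : gg 0 0 = id := by
  funext p i
  fin_cases i <;> simp [gg, parRot, hypRot] <;> ring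

lemma hypRot_eq_gg (θ : ℝ) : hypRot θ = gg 0 θ := by
  funext p i
  fin_cases i <;> simp [gg, parRot, hypRot] <;> ring

lemma parRot_eq_gg (a : ℝ) : parRot a = gg a 0 := by
  funext p i
  fin_cases i <;> simp [gg, parRot, hypRot] <;> ring

lemma InG_gg (a θ : ℝ) : InG (gg a θ) := InG.comp (InG.par a) (InG.hyp θ)

lemma InG_form {T : (Fin 3 → ℝ) → (Fin 3 → ℝ)} (h : InG T) : ∃ a θ, T = gg a θ := by
  induction h with
  | hyp θ => exact ⟨0, θ, hypRot_eq_gg θ⟩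
  | par a => exact ⟨a, 0, parRot_eq_gg a⟩
  | comp hS hT ihS ihT =>
      obtain ⟨a, θ, rfl⟩ := ihS
      obtain ⟨a', θ', rfl⟩ := ihT
      exact ⟨a + a' * Real.exp θ, θ + θ', gg_comp a θ a' θ'⟩

lemma gg_inv_right (a θ : ℝ) : gg a θ ∘ gg (-(a * Real.exp (-θ))) (-θ) = id := by
  rw [gg_comp]
  have : a + -(a * Real.exp (-θ)) * Real.exp θ = 0 := by
    rw [Real.exp_neg]; field_simp; ring
  rw [this, add_neg_cancel, gg_id]

lemma gg_inv_left (a θ : ℝ) : gg (-(a * Real.exp (-θ))) (-θ) ∘ gg a θ = id := by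
  rw [gg_comp]
  have : -(a * Real.exp (-θ)) + a * Real.exp (-θ) = 0 := by ring
  rw [this, neg_add_cancel, gg_id]

lemma gg_bij (a θ : ℝ) : Function.Bijective (gg a θ) := by
  refine ⟨Function.LeftInverse.injective (g := gg (-(a * Real.exp (-θ))) (-θ)) ?_,
    Function.RightInverse.surjective (g := gg (-(a * Real.exp (-θ))) (-θ)) ?_⟩
  · intro p; exact congrFun (gg_inv_left a θ) p
  · intro p; exact congrFun (gg_inv_right a θ) p

lemma gg_zero (a θ : ℝ) : gg a θ 0 = 0 := by
  funext i
  fin_cases i <;> simp [gg, parRot, hypRot]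

lemma mink_hypRot (θ : ℝ) (p q : Fin 3 → ℝ) :
    mink (hypRot θ p) (hypRot θ q) = mink p q := by
  have hid : Real.cosh θ ^ 2 - Real.sinh θ ^ 2 = 1 := Real.cosh_sq_sub_sinh_sq θ
  simp only [mink, hypRot, Matrix.cons_val_zero, Matrix.cons_val_one, Matrix.head_cons,
    Matrix.cons_val_two, Matrix.tail_cons]
  linear_combination (p 1 * q 1 - p 2 * q 2) * hid

lemma mink_parRot (a : ℝ) (p q : Fin 3 → ℝ) :
    mink (parRot a p) (parRot a q) = mink p q := by
  simp only [mink, parRot, Matrix.cons_val_zero, Matrix.cons_val_one, Matrix.head_cons,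
    Matrix.cons_val_two, Matrix.tail_cons]
  ring

lemma mink_gg (a θ : ℝ) (p q : Fin 3 → ℝ) :
    mink (gg a θ p) (gg a θ q) = mink p q := by
  simp only [gg, Function.comp_apply, mink_parRot, mink_hypRot]

/-- Linear-map version of `hypRot`. -/
noncomputable def hypRotL (θ : ℝ) : (Fin 3 → ℝ) →ₗ[ℝ] (Fin 3 → ℝ) where
  toFun := hypRot θ
  map_add' p q := by funext i; fin_cases i <;> simp [hypRot] <;> ring
  map_smul' c p := by funext i; fin_cases i <;> simp [hypRot] <;> ring

/-- Linear-map version of `parRot`. -/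
noncomputable def parRotL (a : ℝ) : (Fin 3 → ℝ) →ₗ[ℝ] (Fin 3 → ℝ) where
  toFun := parRot a
  map_add' p q := by funext i; fin_cases i <;> simp [parRot] <;> ring
  map_smul' c p := by funext i; fin_cases i <;> simp [parRot] <;> ring

noncomputable def ggL (a θ : ℝ) : (Fin 3 → ℝ) →ₗ[ℝ] (Fin 3 → ℝ) :=
  (parRotL a).comp (hypRotL θ)

lemma ggL_coe (a θ : ℝ) : ⇑(ggL a θ) = gg a θ := rfl

lemma gg_e3 (a θ : ℝ) : gg a θ e3 =
    ![a * Real.exp (-θ), Real.sinh θ + a ^ 2 / 2 * Real.exp (-θ),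
      Real.cosh θ + a ^ 2 / 2 * Real.exp (-θ)] := by
  funext i
  fin_cases i <;> simp [gg, parRot, hypRot, e3, ← Real.cosh_sub_sinh] <;> ring

lemma gg_e3_inj {a θ b φ : ℝ} (h : gg a θ e3 = gg b φ e3) : a = b ∧ θ = φ := by
  have h0 := congrFun h 0
  have h1 := congrFun h 1
  have h2 := congrFun h 2
  rw [gg_e3, gg_e3] at h0 h1 h2
  simp only [Matrix.cons_val_zero, Matrix.cons_val_one, Matrix.head_cons,
    Matrix.cons_val_two, Matrix.tail_cons] at h0 h1 h2
  have hexp : Real.exp (-θ) = Real.exp (-φ) := by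
    rw [← Real.cosh_sub_sinh, ← Real.cosh_sub_sinh]
    nlinarith [h1, h2, Real.exp_pos (-θ), Real.exp_pos (-φ)]
  have hθ : θ = φ := by
    have := Real.exp_injective hexp
    linarith
  subst hθ
  have ha : a = b := by
    have := Real.exp_pos (-θ)
    have h0' : a * Real.exp (-θ) = b * Real.exp (-θ) := by rw [h0]
    exact mul_right_cancel₀ (ne_of_gt this) h0'
  exact ⟨ha, rfl⟩

lemma exists_gg_e3 (w : Fin 3 → ℝ) (hw : mink w w = -1) (h2 : 0 < w 2) :
    ∃ a θ, gg a θ e3 = w := by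
  have hw' : w 0 * w 0 + w 1 * w 1 - w 2 * w 2 = -1 := hw
  have hu : 0 < w 2 - w 1 := by nlinarith [sq_nonneg (w 0), sq_nonneg (w 1 + w 2)]
  set u := w 2 - w 1 with hud
  refine ⟨w 0 / u, -Real.log u, ?_⟩
  have hEm : Real.exp (-(-Real.log u)) = u := by rw [neg_neg, Real.exp_log hu]
  have hEp : Real.exp (-Real.log u) = u⁻¹ := by
    rw [Real.exp_neg, Real.exp_log hu]
  have hsinh : Real.sinh (-Real.log u) = (u⁻¹ - u) / 2 := by
    rw [Real.sinh_eq, hEp, neg_neg, Real.exp_log hu]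
  have hcosh : Real.cosh (-Real.log u) = (u⁻¹ + u) / 2 := by
    rw [Real.cosh_eq, hEp, neg_neg, Real.exp_log hu]
  have hun : u ≠ 0 := ne_of_gt hu
  have c0 : w 0 / u * u = w 0 := div_mul_cancel₀ _ hun
  have c1 : (u⁻¹ - u) / 2 + (w 0 / u) ^ 2 / 2 * u = w 1 := by
    field_simp
    linear_combination hw'
  have c2 : (u⁻¹ + u) / 2 + (w 0 / u) ^ 2 / 2 * u = w 2 := by
    field_simp
    linear_combination hw'
  rw [gg_e3, hEm, hsinh, hcosh]
  funext i
  fin_cases i <;> simp [c0, c1, c2]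

/-- every time-orientation preserving Lorentz isometry `S` of
`𝕃³` factors uniquely as `S = S₁ ∘ S₂` with `S₁ ∈ Iso_ξ` (Lorentz isometries
whose linear part fixes `(0,0,1)`) and `S₂ ∈ G`. -/
theorem lorentz_iso_factorization (S : (Fin 3 → ℝ) → (Fin 3 → ℝ))
    (hS : IsLorentzIso S) (hTime : 0 < linPart S e3 2) :
    ∃! ST : ((Fin 3 → ℝ) → (Fin 3 → ℝ)) × ((Fin 3 → ℝ) → (Fin 3 → ℝ)),
      (IsLorentzIso ST.1 ∧ linPart ST.1 e3 = e3) ∧ InG ST.2 ∧ S = ST.1 ∘ ST.2 := by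
  obtain ⟨L, b, hLbij, hLmink, hLb⟩ := hS
  have hlin : ∀ p, linPart S p = L p := by
    intro p
    simp [linPart, hLb, map_zero]
  obtain ⟨w, hLw⟩ := hLbij.surjective e3
  have hmw : mink w w = -1 := by
    have h := hLmink w w
    rw [hLw] at h
    have h2 : mink e3 e3 = -1 := by simp [mink, e3]
    linarith
  have hw2 : 0 < w 2 := by
    have h := hLmink w e3
    rw [hLw] at h
    have h1 : mink e3 (L e3) = -(L e3 2) := by simp [mink, e3]
    have h2 : mink w e3 = -(w 2) := by simp [mink, e3]
    rw [hlin e3] at hTime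
    linarith
  obtain ⟨a, θ, hgw⟩ := exists_gg_e3 w hmw hw2
  refine ⟨(S ∘ gg a θ, gg (-(a * Real.exp (-θ))) (-θ)), ⟨⟨?_, ?_⟩, ?_, ?_⟩, ?_⟩
  · refine ⟨L.comp (ggL a θ), b, ?_, ?_, ?_⟩
    · rw [LinearMap.coe_comp, ggL_coe]
      exact hLbij.comp (gg_bij a θ)
    · intro p q
      simp only [LinearMap.coe_comp, Function.comp_apply, ggL_coe]
      rw [hLmink, mink_gg]
    · intro p
      simp only [Function.comp_apply, LinearMap.coe_comp, ggL_coe]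
      exact hLb _
  · have h : linPart (S ∘ gg a θ) e3 = L (gg a θ e3) := by
      simp [linPart, hLb, gg_zero, map_zero]
    rw [h, hgw, hLw]
  · exact InG_gg _ _
  · show S = (S ∘ gg a θ) ∘ gg (-(a * Real.exp (-θ))) (-θ)
    rw [Function.comp_assoc, gg_inv_right, Function.comp_id]
  · rintro ⟨T₁, T₂⟩ ⟨⟨hT1iso, hT1fix⟩, hT2G, hfact⟩
    dsimp only at hT1iso hT1fix hT2G hfact
    obtain ⟨a', θ', rfl⟩ := InG_form hT2G
    obtain ⟨L₁, b₁, hbij₁, hmink₁, hT1b⟩ := hT1iso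
    have hfixL : L₁ e3 = e3 := by
      have h : linPart T₁ e3 = L₁ e3 := by simp [linPart, hT1b, map_zero]
      rw [h] at hT1fix
      exact hT1fix
    have key : ∀ p, L p = L₁ (gg a' θ' p) := by
      intro p
      have h1 : S p = T₁ (gg a' θ' p) := congrFun hfact p
      have h0 : S 0 = T₁ 0 := by
        have h := congrFun hfact 0
        rwa [Function.comp_apply, gg_zero] at h
      have e1 : L p = S p - S 0 := by
        rw [hLb p, hLb 0, map_zero]
        abel
      rw [e1, h1, h0, hT1b, hT1b 0, map_zero]
      abel
    have hq : gg (-(a' * Real.exp (-θ'))) (-θ') e3 = w := by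
      apply hLbij.injective
      rw [hLw, key]
      have h : gg a' θ' (gg (-(a' * Real.exp (-θ'))) (-θ') e3) = e3 :=
        congrFun (gg_inv_right a' θ') e3
      rw [h, hfixL]
    obtain ⟨hpa, hpθ⟩ := gg_e3_inj (hq.trans hgw.symm)
    have hθ' : θ' = -θ := by linarith
    have ha' : a' = -(a * Real.exp (-θ)) := by
      subst hθ'
      rw [neg_neg] at hpa
      have hp := (Real.exp_pos θ).ne'
      rw [Real.exp_neg]
      field_simp
      linarith [hpa]
    have hT2 : gg a' θ' = gg (-(a * Real.exp (-θ))) (-θ) := by rw [ha', hθ']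
    have hT1 : T₁ = S ∘ gg a θ := by
      funext p
      have h1 : S (gg a θ p) = T₁ (gg a' θ' (gg a θ p)) := congrFun hfact (gg a θ p)
      have h2 : gg a' θ' (gg a θ p) = p := by
        rw [hT2]
        exact congrFun (gg_inv_left a θ) p
      rw [h2] at h1
      exact h1.symm
    rw [hT1, hT2]
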